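/- Let C(m,L,w) be the constant subblock-composition space with 2 ≤ w ≤ L−2. Any code C ⊆ C(m,L,w) with minimum Hamming distance at least 6 satisfies: |C| ≤ C(L,w−1)²·C(L,w)^{m−2}/w² if w ≤ (L+2)/(m+1); |C| ≤ C(L,w+1)²·C(L,w)^{m−2}/(L−w)² if w ≥ (mL−2)/(m+1); and |C| ≤ C(L,w)^m/(1 + m·w·(L−w)) otherwise. -/

import Mathlib

open Finset

/-- The Hamming weight of a length-`L` binary subblock. -/
def wt {L : ℕ} (b : Fin L → Bool) : ℕ :=
  (Finset.univ.filter (fun j => b j = true)).card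

/-- Hamming distance between two binary words of length `mL`, given as `m`
subblocks of length `L`. -/
def hdist {m L : ℕ} (x y : Fin m → Fin L → Bool) : ℕ :=
  ∑ i, hammingDist (x i) (y i)

lemma wt_le {L : ℕ} (b : Fin L → Bool) : wt b ≤ L := by
  simpa [wt] using (card_filter_le univ (fun j => b j = true))

lemma card_false {L : ℕ} (b : Fin L → Bool) :
    (univ.filter fun p => b p = false).card = L - wt b := by
  have h := card_filter_add_card_filter_not (s := (univ : Finset (Fin L)))
    (p := fun p => b p = true)
  have h2 : (univ.filter fun p => ¬ b p = true) = (univ.filter fun p => b p = false) := by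
    apply filter_congr; intro p _; simp
  rw [h2] at h
  simp only [card_univ, Fintype.card_fin] at h
  unfold wt; omega

lemma wt_update_false {L : ℕ} (b : Fin L → Bool) (p : Fin L) (h : b p = true) :
    wt (Function.update b p false) + 1 = wt b := by
  have hset : (univ.filter fun j => Function.update b p false j = true)
      = (univ.filter fun j => b j = true).erase p := by
    ext q
    by_cases hq : q = p
    · subst hq; simp
    · simp [Function.update_of_ne hq, hq]
  have hp : p ∈ univ.filter fun j => b j = true := by simp [h]
  rw [wt, hset, wt]
  exact card_erase_add_one hp

lemma wt_update_true {L : ℕ} (b : Fin L → Bool) (p : Fin L) (h : b p = false) :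
    wt (Function.update b p true) = wt b + 1 := by
  have hset : (univ.filter fun j => Function.update b p true j = true)
      = insert p (univ.filter fun j => b j = true) := by
    ext q
    by_cases hq : q = p
    · subst hq; simp
    · simp [Function.update_of_ne hq, hq]
  have hp : p ∉ univ.filter fun j => b j = true := by simp [h]
  rw [wt, hset, wt, card_insert_of_notMem hp]

lemma hammingDist_update_le {L : ℕ} (b : Fin L → Bool) (p : Fin L) (v : Bool) :
    hammingDist b (Function.update b p v) ≤ 1 := by
  have : (univ.filter fun q => b q ≠ Function.update b p v q) ⊆ {p} := by
    intro q hq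
    simp only [mem_filter, mem_univ, true_and] at hq
    by_contra hqp
    simp only [mem_singleton] at hqp
    exact hq (by rw [Function.update_of_ne hqp])
  calc hammingDist b (Function.update b p v)
      = (univ.filter fun q => b q ≠ Function.update b p v q).card := rfl
    _ ≤ ({p} : Finset (Fin L)).card := card_le_card this
    _ = 1 := card_singleton p

lemma hdist_self {m L : ℕ} (x : Fin m → Fin L → Bool) : hdist x x = 0 := by
  simp [hdist]

lemma hdist_triangle {m L : ℕ} (x y z : Fin m → Fin L → Bool) :
    hdist x z ≤ hdist x y + hdist y z := by
  rw [hdist, hdist, hdist, ← Finset.sum_add_distrib]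
  exact Finset.sum_le_sum fun i _ => hammingDist_triangle _ _ _

lemma hdist_update {m L : ℕ} (c : Fin m → Fin L → Bool) (i : Fin m) (blk : Fin L → Bool) :
    hdist c (Function.update c i blk) = hammingDist (c i) blk := by
  rw [hdist]
  rw [Finset.sum_eq_single_of_mem i (mem_univ i)]
  · simp
  · intro j _ hj
    rw [Function.update_of_ne hj]
    exact hammingDist_self _

/-- Number of subblocks of weight `k`. -/
lemma card_wt_eq (L k : ℕ) :
    (univ.filter fun b : Fin L → Bool => wt b = k).card = L.choose k := by
  rw [← Fintype.card_subtype]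
  have e : {b : Fin L → Bool // wt b = k} ≃ {s : Finset (Fin L) // s.card = k} :=
    { toFun := fun b => ⟨univ.filter fun j => b.1 j = true, b.2⟩
      invFun := fun s => ⟨fun p => decide (p ∈ s.1), by
        have hs : (univ.filter fun j => decide (j ∈ s.1) = true) = s.1 := by
          ext p; simp
        rw [wt, hs]
        exact s.2⟩
      left_inv := by
        rintro ⟨b, hb⟩
        apply Subtype.ext
        funext p
        simp
      right_inv := by
        rintro ⟨s, hs⟩
        apply Subtype.ext
        ext p
        simp }
  rw [Fintype.card_congr e, Fintype.card_finset_len, Fintype.card_fin]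

lemma card_filter_forall {m L : ℕ} (W : Fin m → ℕ) :
    (univ.filter fun z : Fin m → Fin L → Bool => ∀ i, wt (z i) = W i).card
      = ∏ i, L.choose (W i) := by
  rw [← Fintype.card_subtype, Fintype.card_congr (Equiv.subtypePiEquivPi (p := fun (i : Fin m) (b : Fin L → Bool) => wt b = W i)), Fintype.card_pi]
  congr 1
  funext i
  rw [Fintype.card_subtype, card_wt_eq]

/-- Generalized sphere-packing. -/
lemma packing {m L : ℕ} (C : Finset (Fin m → Fin L → Bool))
    (hmin : ∀ x ∈ C, ∀ y ∈ C, x ≠ y → 6 ≤ hdist x y)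
    (P : (Fin m → Fin L → Bool) → Prop) [DecidablePred P] (N : ℕ)
    (hball : ∀ c ∈ C, N ≤ (univ.filter (fun z => hdist c z ≤ 2 ∧ P z)).card) :
    C.card * N ≤ (univ.filter P).card := by
  classical
  set D := fun c : Fin m → Fin L → Bool => univ.filter (fun z => hdist c z ≤ 2 ∧ P z) with hD
  have hdisj : ∀ x ∈ C, ∀ y ∈ C, x ≠ y → Disjoint (D x) (D y) := by
    intro x hx y hy hxy
    rw [Finset.disjoint_left]
    intro z hz1 hz2
    simp only [hD, mem_filter, mem_univ, true_and] at hz1 hz2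
    have h6 := hmin x hx y hy hxy
    have ht : hdist x y ≤ hdist x z + hdist z y := hdist_triangle x z y
    have hc : hdist z y = hdist y z := by
      rw [hdist, hdist]; exact Finset.sum_congr rfl fun i _ => hammingDist_comm _ _
    omega
  calc C.card * N = ∑ _c ∈ C, N := by rw [Finset.sum_const, smul_eq_mul]
    _ ≤ ∑ c ∈ C, (D c).card := Finset.sum_le_sum hball
    _ = (C.biUnion D).card := (card_biUnion hdisj).symm
    _ ≤ (univ.filter P).card := by
        apply card_le_card
        intro z hz
        rw [Finset.mem_biUnion] at hz
        obtain ⟨c, _, hzc⟩ := hz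
        simp only [hD, mem_filter, mem_univ, true_and] at hzc
        simp [hzc.2]

/-- Ball for the "no weight change" packing: the center plus all single-swap words. -/
lemma ball3 {m L w : ℕ} (c : Fin m → Fin L → Bool) (hc : ∀ i, wt (c i) = w) :
    1 + m * (w * (L - w)) ≤
      (univ.filter fun z => hdist c z ≤ 2 ∧ ∀ i, wt (z i) = w).card := by
  classical
  set D := univ.filter fun z : Fin m → Fin L → Bool => hdist c z ≤ 2 ∧ ∀ i, wt (z i) = w
    with hD
  have hcD : c ∈ D := by simp [hD, hdist_self, hc]
  set S : Finset ((_ : Fin m) × (Fin L × Fin L)) :=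
    univ.sigma (fun i => (univ.filter fun p => c i p = true) ×ˢ
      (univ.filter fun q => c i q = false)) with hS
  set φ : ((_ : Fin m) × (Fin L × Fin L)) → (Fin m → Fin L → Bool) := fun a =>
    Function.update c a.1
      (Function.update (Function.update (c a.1) a.2.1 false) a.2.2 true) with hφ
  have hmemS : ∀ (i : Fin m) (p q : Fin L), (⟨i, (p, q)⟩ : (_ : Fin m) × (Fin L × Fin L)) ∈ S →
      c i p = true ∧ c i q = false := by
    intro i p q ha
    rw [hS, Finset.mem_sigma, Finset.mem_product] at ha
    exact ⟨(mem_filter.mp ha.2.1).2, (mem_filter.mp ha.2.2).2⟩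
  have key : ∀ (i : Fin m) (p q : Fin L),
      (⟨i, (p, q)⟩ : (_ : Fin m) × (Fin L × Fin L)) ∈ S →
      (∀ j, j ≠ i → φ ⟨i, (p, q)⟩ j = c j) ∧
      φ ⟨i, (p, q)⟩ i p = false ∧ φ ⟨i, (p, q)⟩ i q = true ∧ φ ⟨i, (p, q)⟩ ∈ D := by
    intro i p q ha
    obtain ⟨hp, hq⟩ := hmemS i p q ha
    have hpq : p ≠ q := by
      intro h; rw [h, hq] at hp; exact Bool.false_ne_true hp
    have hoth : ∀ j, j ≠ i → φ ⟨i, (p, q)⟩ j = c j := fun j hj =>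
      Function.update_of_ne hj _ _
    have hai : φ ⟨i, (p, q)⟩ i = Function.update (Function.update (c i) p false) q true := by
      rw [hφ]; exact Function.update_self _ _ _
    have hfp : φ ⟨i, (p, q)⟩ i p = false := by
      rw [hai, Function.update_of_ne hpq, Function.update_self]
    have hfq : φ ⟨i, (p, q)⟩ i q = true := by
      rw [hai, Function.update_self]
    have hwt : ∀ j, wt (φ ⟨i, (p, q)⟩ j) = w := by
      intro j
      by_cases hj : j = i
      · subst hj
        rw [hai]
        have hmid : (Function.update (c j) p false) q = false := by
          rw [Function.update_of_ne hpq.symm]; exact hq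
        rw [wt_update_true _ _ hmid, wt_update_false _ _ hp]
        exact hc j
      · rw [hoth j hj]; exact hc j
    have hdle : hdist c (φ ⟨i, (p, q)⟩) ≤ 2 := by
      have h2 : hdist c (φ ⟨i, (p, q)⟩)
          = hammingDist (c i) (Function.update (Function.update (c i) p false) q true) := by
        rw [hφ]; exact hdist_update c i _
      rw [h2]
      have t1 := hammingDist_update_le (c i) p false
      have t2 := hammingDist_update_le (Function.update (c i) p false) q true
      have t3 := hammingDist_triangle (c i) (Function.update (c i) p false)
        (Function.update (Function.update (c i) p false) q true)
      omega
    exact ⟨hoth, hfp, hfq, by simp [hD, hdle, hwt]⟩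
  have hinj : Set.InjOn φ S := by
    rintro ⟨i, p, q⟩ ha ⟨j, p', q'⟩ hb hab
    obtain ⟨hpa, hqa⟩ := hmemS i p q ha
    obtain ⟨hpb, hqb⟩ := hmemS j p' q' hb
    obtain ⟨hotha, hfpa, hfqa, -⟩ := key i p q ha
    obtain ⟨hothb, hfpb, hfqb, -⟩ := key j p' q' hb
    have hij : i = j := by
      by_contra hne
      have h1 : φ ⟨j, (p', q')⟩ i = c i := hothb i (fun h => hne h)
      rw [← hab] at h1
      have h2 := congrFun h1 p
      rw [hfpa, hpa] at h2
      exact Bool.false_ne_true h2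
    subst hij
    have hpq' : p ≠ q' := by
      intro h; rw [h, hqb] at hpa; exact Bool.false_ne_true hpa
    have hbi : φ ⟨i, (p', q')⟩ i = Function.update (Function.update (c i) p' false) q' true :=
      by rw [hφ]; exact Function.update_self _ _ _
    have hp : p = p' := by
      by_contra hne
      have h2 : φ ⟨i, (p', q')⟩ i p = c i p := by
        rw [hbi, Function.update_of_ne hpq', Function.update_of_ne hne]
      rw [← hab] at h2
      rw [hfpa, hpa] at h2
      exact Bool.false_ne_true h2
    have hq : q = q' := by
      by_contra hne
      have h3 : (Function.update (c i) p' false) q = false := by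
        by_cases hqp : q = p'
        · rw [hqp, Function.update_self]
        · rw [Function.update_of_ne hqp]; exact hqa
      have h2 : φ ⟨i, (p', q')⟩ i q = false := by
        rw [hbi, Function.update_of_ne hne]; exact h3
      rw [← hab] at h2
      rw [hfqa] at h2
      exact Bool.false_ne_true h2.symm
    rw [hp, hq]
  have himg : S.image φ ⊆ D.erase c := by
    intro z hz
    rw [mem_image] at hz
    obtain ⟨⟨i, p, q⟩, ha, rfl⟩ := hz
    obtain ⟨hpa, hqa⟩ := hmemS i p q ha
    obtain ⟨-, -, hfq, hmem⟩ := key i p q ha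
    rw [mem_erase]
    refine ⟨?_, hmem⟩
    intro hcon
    have := congrFun (congrFun hcon i) q
    rw [hfq, hqa] at this
    exact Bool.false_ne_true this.symm
  have hScard : S.card = m * (w * (L - w)) := by
    have hper : ∀ i : Fin m, ((univ.filter fun p => c i p = true) ×ˢ
        (univ.filter fun q => c i q = false)).card = w * (L - w) := by
      intro i
      rw [card_product, card_false]
      have h1 : (univ.filter fun p => c i p = true).card = wt (c i) := rfl
      rw [h1, hc i]
    rw [hS, card_sigma, Finset.sum_congr rfl fun i _ => hper i, Finset.sum_const, card_univ,
      Fintype.card_fin, smul_eq_mul]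
  have h2 : S.card ≤ (D.erase c).card := by
    rw [← Finset.card_image_of_injOn hinj]
    exact card_le_card himg
  have h3 := card_erase_add_one hcD
  omega

/-- Ball for the "drop a one in each of two distinct blocks" packing. -/
lemma ball2flip {m L w : ℕ} (c : Fin m → Fin L → Bool) (hc : ∀ i, wt (c i) = w)
    (i0 i1 : Fin m) (h01 : i0 ≠ i1) :
    w * w ≤ (univ.filter fun z => hdist c z ≤ 2 ∧
      ∀ i, wt (z i) = if i = i0 ∨ i = i1 then w - 1 else w).card := by
  classical
  set D := univ.filter fun z : Fin m → Fin L → Bool => hdist c z ≤ 2 ∧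
      ∀ i, wt (z i) = if i = i0 ∨ i = i1 then w - 1 else w with hD
  set S := (univ.filter fun p => c i0 p = true) ×ˢ (univ.filter fun q => c i1 q = true)
    with hS
  set φ : Fin L × Fin L → (Fin m → Fin L → Bool) := fun a =>
    Function.update (Function.update c i0 (Function.update (c i0) a.1 false)) i1
      (Function.update (c i1) a.2 false) with hφ
  have hmemS : ∀ (p q : Fin L), (p, q) ∈ S → c i0 p = true ∧ c i1 q = true := by
    intro p q ha
    rw [hS, Finset.mem_product] at ha
    exact ⟨(mem_filter.mp ha.1).2, (mem_filter.mp ha.2).2⟩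
  have hev0 : ∀ p q : Fin L, φ (p, q) i0 = Function.update (c i0) p false := by
    intro p q
    rw [hφ]
    show Function.update (Function.update c i0 _) i1 _ i0 = _
    rw [Function.update_of_ne h01, Function.update_self]
  have hev1 : ∀ p q : Fin L, φ (p, q) i1 = Function.update (c i1) q false := by
    intro p q
    rw [hφ]
    exact Function.update_self _ _ _
  have hevoth : ∀ (p q : Fin L) (j : Fin m), j ≠ i0 → j ≠ i1 → φ (p, q) j = c j := by
    intro p q j hj0 hj1
    rw [hφ]
    show Function.update (Function.update c i0 _) i1 _ j = _
    rw [Function.update_of_ne hj1, Function.update_of_ne hj0]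
  have hmem : ∀ (p q : Fin L), (p, q) ∈ S → φ (p, q) ∈ D := by
    intro p q ha
    obtain ⟨hp, hq⟩ := hmemS p q ha
    have hwt : ∀ i, wt (φ (p, q) i) = if i = i0 ∨ i = i1 then w - 1 else w := by
      intro i
      by_cases hi0 : i = i0
      · subst hi0
        rw [hev0, if_pos (Or.inl rfl)]
        have := wt_update_false (c i) p hp
        rw [hc i] at this
        omega
      · by_cases hi1 : i = i1
        · subst hi1
          rw [hev1, if_pos (Or.inr rfl)]
          have := wt_update_false (c i) q hq
          rw [hc i] at this
          omega
        · rw [hevoth p q i hi0 hi1, if_neg (by tauto)]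
          exact hc i
    have hdle : hdist c (φ (p, q)) ≤ 2 := by
      have ht := hdist_triangle c (Function.update c i0 (Function.update (c i0) p false))
        (φ (p, q))
      have h1 : hdist c (Function.update c i0 (Function.update (c i0) p false))
          ≤ 1 := by
        rw [hdist_update]; exact hammingDist_update_le _ _ _
      have h2 : hdist (Function.update c i0 (Function.update (c i0) p false)) (φ (p, q))
          ≤ 1 := by
        rw [hφ]
        show hdist _ (Function.update (Function.update c i0 _) i1 _) ≤ 1
        rw [hdist_update, Function.update_of_ne (fun h => h01 h.symm)]
        exact hammingDist_update_le _ _ _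
      omega
    simp [hD, hdle, hwt]
  have hinj : Set.InjOn φ S := by
    rintro ⟨p, q⟩ ha ⟨p', q'⟩ hb hab
    obtain ⟨hpa, hqa⟩ := hmemS p q ha
    obtain ⟨hpb, hqb⟩ := hmemS p' q' hb
    have hp : p = p' := by
      by_contra hne
      have h1 := congrFun (hev0 p q) p
      rw [hab, hev0, Function.update_self] at h1
      rw [Function.update_of_ne (fun h => hne h)] at h1
      rw [hpa] at h1
      exact Bool.false_ne_true h1.symm
    have hq : q = q' := by
      by_contra hne
      have h1 := congrFun (hev1 p q) q
      rw [hab, hev1, Function.update_self] at h1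
      rw [Function.update_of_ne (fun h => hne h)] at h1
      rw [hqa] at h1
      exact Bool.false_ne_true h1.symm
    rw [hp, hq]
  have hScard : S.card = w * w := by
    rw [hS, card_product]
    have h0 : (univ.filter fun p => c i0 p = true).card = wt (c i0) := rfl
    have h1 : (univ.filter fun q => c i1 q = true).card = wt (c i1) := rfl
    rw [h0, h1, hc i0, hc i1]
  calc w * w = S.card := hScard.symm
    _ = (S.image φ).card := (Finset.card_image_of_injOn hinj).symm
    _ ≤ D.card := by
        apply card_le_card
        intro z hz
        rw [mem_image] at hz
        obtain ⟨⟨p, q⟩, ha, rfl⟩ := hz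
        exact hmem p q ha

/-- Ball for the "drop a one in one block" packing (used when `m = 1`). -/
lemma ball1flip {m L w : ℕ} (c : Fin m → Fin L → Bool) (hc : ∀ i, wt (c i) = w)
    (i0 : Fin m) :
    w ≤ (univ.filter fun z => hdist c z ≤ 2 ∧
      ∀ i, wt (z i) = if i = i0 then w - 1 else w).card := by
  classical
  set D := univ.filter fun z : Fin m → Fin L → Bool => hdist c z ≤ 2 ∧
      ∀ i, wt (z i) = if i = i0 then w - 1 else w with hD
  set S := univ.filter fun p => c i0 p = true with hS
  set φ : Fin L → (Fin m → Fin L → Bool) := fun p =>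
    Function.update c i0 (Function.update (c i0) p false) with hφ
  have hmemS : ∀ p ∈ S, c i0 p = true := fun p hp => (mem_filter.mp hp).2
  have hev0 : ∀ p : Fin L, φ p i0 = Function.update (c i0) p false := by
    intro p
    rw [hφ]
    exact Function.update_self _ _ _
  have hmem : ∀ p ∈ S, φ p ∈ D := by
    intro p ha
    have hp := hmemS p ha
    have hwt : ∀ i, wt (φ p i) = if i = i0 then w - 1 else w := by
      intro i
      by_cases hi0 : i = i0
      · subst hi0
        rw [hev0, if_pos rfl]
        have := wt_update_false (c i) p hp
        rw [hc i] at this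
        omega
      · rw [hφ]
        show wt (Function.update c i0 _ i) = _
        rw [Function.update_of_ne hi0, if_neg hi0]
        exact hc i
    have hdle : hdist c (φ p) ≤ 2 := by
      rw [hφ]
      show hdist c (Function.update c i0 _) ≤ 2
      rw [hdist_update]
      have := hammingDist_update_le (c i0) p false
      omega
    simp [hD, hdle, hwt]
  have hinj : Set.InjOn φ S := by
    intro p ha p' hb hab
    by_contra hne
    have h1 := congrFun (hev0 p) p
    rw [hab, hev0, Function.update_self] at h1
    rw [Function.update_of_ne (fun h => hne h)] at h1
    have hpa := hmemS p (Finset.mem_coe.mp ha)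
    rw [hpa] at h1
    exact Bool.false_ne_true h1.symm
  have hScard : S.card = w := by
    rw [hS]
    have h0 : (univ.filter fun p => c i0 p = true).card = wt (c i0) := rfl
    rw [h0, hc i0]
  calc w = S.card := hScard.symm
    _ = (S.image φ).card := (Finset.card_image_of_injOn hinj).symm
    _ ≤ D.card := by
        apply card_le_card
        intro z hz
        rw [mem_image] at hz
        obtain ⟨p, ha, rfl⟩ := hz
        exact hmem p ha

lemma w_le_choose {L w : ℕ} (hw : 1 ≤ w) (hwL : w ≤ L) : w ≤ L.choose (w - 1) := by
  have h1 : w.choose (w - 1) = w := by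
    have h2 := Nat.choose_symm (Nat.sub_le w 1)
    rw [Nat.sub_sub_self hw] at h2
    rw [← h2, Nat.choose_one_right]
  calc w = w.choose (w - 1) := h1.symm
    _ ≤ L.choose (w - 1) := Nat.choose_le_choose _ hwL

lemma prod_two {m L : ℕ} (i0 i1 : Fin m) (h01 : i0 ≠ i1) (u v : ℕ) :
    (∏ i, L.choose (if i = i0 ∨ i = i1 then u else v))
      = L.choose u ^ 2 * L.choose v ^ (m - 2) := by
  rw [← Finset.mul_prod_erase univ _ (mem_univ i0)]
  have hi1 : i1 ∈ univ.erase i0 := mem_erase.mpr ⟨h01.symm, mem_univ i1⟩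
  rw [← Finset.mul_prod_erase _ _ hi1]
  have hrest : ∀ i ∈ (univ.erase i0).erase i1,
      L.choose (if i = i0 ∨ i = i1 then u else v) = L.choose v := by
    intro i hi
    rw [mem_erase, mem_erase] at hi
    rw [if_neg (by tauto)]
  rw [Finset.prod_congr rfl hrest, Finset.prod_const]
  have hcard : ((univ.erase i0).erase i1).card = m - 2 := by
    rw [card_erase_of_mem hi1, card_erase_of_mem (mem_univ i0), card_univ, Fintype.card_fin]
    omega
  rw [hcard, if_pos (Or.inl rfl), if_pos (Or.inr rfl)]
  ring

/-- The main packing bound for dropping weights (branches 1 and 2). -/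
lemma bound1 {L w : ℕ} (m : ℕ) (hw1 : 2 ≤ w) (hwL : w + 2 ≤ L)
    (C : Finset (Fin m → Fin L → Bool))
    (hC : ∀ c ∈ C, ∀ i, wt (c i) = w)
    (hmin : ∀ x ∈ C, ∀ y ∈ C, x ≠ y → 6 ≤ hdist x y) :
    C.card * (w * w) ≤ L.choose (w - 1) ^ 2 * L.choose w ^ (m - 2) := by
  classical
  have hwB : w ≤ L.choose (w - 1) := w_le_choose (by omega) (by omega)
  revert C
  match m with
  | 0 =>
    intro C hC hmin
    have h1 : C.card ≤ 1 := by
      apply Finset.card_le_one.mpr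
      intro a ha b hb
      by_contra hne
      have h6 := hmin a ha b hb hne
      have : hdist a b = 0 := by simp [hdist]
      omega
    norm_num
    calc C.card * (w * w) ≤ 1 * (w * w) := Nat.mul_le_mul_right _ h1
      _ = w * w := one_mul _
      _ ≤ L.choose (w - 1) * L.choose (w - 1) := Nat.mul_le_mul hwB hwB
      _ = L.choose (w - 1) ^ 2 := (sq _).symm
  | 1 =>
    intro C hC hmin
    have hpack := packing C hmin
      (fun z => ∀ i, wt (z i) = if i = (0 : Fin 1) then w - 1 else w) w
      (fun c hcm => ball1flip c (hC c hcm) 0)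
    rw [card_filter_forall (fun i => if i = (0 : Fin 1) then w - 1 else w)] at hpack
    rw [Fin.prod_univ_one, if_pos rfl] at hpack
    norm_num
    calc C.card * (w * w) = (C.card * w) * w := by ring
      _ ≤ L.choose (w - 1) * L.choose (w - 1) := Nat.mul_le_mul hpack hwB
      _ = L.choose (w - 1) ^ 2 := (sq _).symm
  | (n + 2) =>
    intro C hC hmin
    have h01 : (0 : Fin (n + 2)) ≠ 1 := by
      intro h
      exact absurd (congrArg Fin.val h) (by norm_num)
    have hpack := packing C hmin
      (fun z => ∀ i, wt (z i) = if i = (0 : Fin (n + 2)) ∨ i = 1 then w - 1 else w) (w * w)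
      (fun c hcm => ball2flip c (hC c hcm) 0 1 h01)
    rw [card_filter_forall (fun i => if i = (0 : Fin (n + 2)) ∨ i = 1 then w - 1 else w),
      prod_two 0 1 h01] at hpack
    exact hpack

/-- The packing bound for branch 3. -/
lemma bound3 {m L w : ℕ}
    (C : Finset (Fin m → Fin L → Bool))
    (hC : ∀ c ∈ C, ∀ i, wt (c i) = w)
    (hmin : ∀ x ∈ C, ∀ y ∈ C, x ≠ y → 6 ≤ hdist x y) :
    C.card * (1 + m * (w * (L - w))) ≤ L.choose w ^ m := by
  classical
  have hpack := packing C hmin (fun z => ∀ i, wt (z i) = w) (1 + m * (w * (L - w)))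
    (fun c hcm => ball3 c (hC c hcm))
  rw [card_filter_forall (fun _ => w), Finset.prod_const, card_univ, Fintype.card_fin]
    at hpack
  exact hpack

lemma bound2 {m L w : ℕ} (hw1 : 2 ≤ w) (hwL : w + 2 ≤ L)
    (C : Finset (Fin m → Fin L → Bool))
    (hC : ∀ c ∈ C, ∀ i, wt (c i) = w)
    (hmin : ∀ x ∈ C, ∀ y ∈ C, x ≠ y → 6 ≤ hdist x y) :
    C.card * ((L - w) * (L - w)) ≤ L.choose (w + 1) ^ 2 * L.choose w ^ (m - 2) := by
  classical
  set neg : (Fin m → Fin L → Bool) → (Fin m → Fin L → Bool) :=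
    fun c i p => !(c i p) with hneg
  have hinj : Function.Injective neg := by
    intro a b h
    funext i p
    have h2 := congrFun (congrFun h i) p
    simpa [hneg] using h2
  set C' := C.image neg with hC'def
  have hcard : C'.card = C.card := card_image_of_injective _ hinj
  have hwtneg : ∀ b : Fin L → Bool, wt (fun p => !(b p)) = L - wt b := by
    intro b
    rw [wt]
    have h1 : (univ.filter fun j => (!(b j)) = true) = (univ.filter fun j => b j = false) := by
      apply filter_congr
      intro j _
      simp
    rw [h1, card_false]
  have hC' : ∀ c ∈ C', ∀ i, wt (c i) = L - w := by
    intro c hc i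
    rw [hC'def, mem_image] at hc
    obtain ⟨a, ha, rfl⟩ := hc
    have := hwtneg (a i)
    rw [hC a ha i] at this
    exact this
  have hdistneg : ∀ x y : Fin m → Fin L → Bool, hdist (neg x) (neg y) = hdist x y := by
    intro x y
    rw [hdist, hdist]
    apply Finset.sum_congr rfl
    intro i _
    rw [hammingDist, hammingDist]
    congr 1
    apply filter_congr
    intro p _
    simp [hneg]
  have hmin' : ∀ x ∈ C', ∀ y ∈ C', x ≠ y → 6 ≤ hdist x y := by
    intro x hx y hy hxy
    rw [hC'def, mem_image] at hx hy
    obtain ⟨a, ha, rfl⟩ := hx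
    obtain ⟨b, hb, rfl⟩ := hy
    rw [hdistneg]
    exact hmin a ha b hb (fun h => hxy (by rw [h]))
  have h := bound1 m (by omega : 2 ≤ L - w) (by omega : (L - w) + 2 ≤ L) C' hC' hmin'
  rw [hcard] at h
  have e1 : L - w - 1 = L - (w + 1) := by omega
  have e2 : L.choose (L - (w + 1)) = L.choose (w + 1) := Nat.choose_symm (by omega)
  have e3 : L.choose (L - w) = L.choose w := Nat.choose_symm (by omega)
  rw [e1, e2, e3] at h
  exact h

/-- Corollary 8(ii): generalized sphere-packing bound for double-error
correcting constant subblock-composition codes. -/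
theorem stmt_11 (m L w : ℕ) (hw1 : 2 ≤ w) (hw2 : w ≤ L - 2)
    (C : Finset (Fin m → Fin L → Bool))
    (hC : ∀ c ∈ C, ∀ i, wt (c i) = w)
    (hmin : ∀ x ∈ C, ∀ y ∈ C, x ≠ y → 6 ≤ hdist x y) :
    ((w : ℚ) ≤ ((L : ℚ) + 2) / ((m : ℚ) + 1) →
      (C.card : ℚ) ≤
        ((Nat.choose L (w - 1) : ℚ) ^ 2 * (Nat.choose L w : ℚ) ^ (m - 2)) / (w : ℚ) ^ 2) ∧
    (((m : ℚ) * (L : ℚ) - 2) / ((m : ℚ) + 1) ≤ (w : ℚ) →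
      (C.card : ℚ) ≤
        ((Nat.choose L (w + 1) : ℚ) ^ 2 * (Nat.choose L w : ℚ) ^ (m - 2)) /
          ((L - w : ℕ) : ℚ) ^ 2) ∧
    (((L : ℚ) + 2) / ((m : ℚ) + 1) < (w : ℚ) ∧
        (w : ℚ) < ((m : ℚ) * (L : ℚ) - 2) / ((m : ℚ) + 1) →
      (C.card : ℚ) ≤
        (Nat.choose L w : ℚ) ^ m / (1 + (m : ℚ) * (w : ℚ) * ((L - w : ℕ) : ℚ))) := by
  have hwL : w + 2 ≤ L := by omega
  refine ⟨fun _ => ?_, fun _ => ?_, fun _ => ?_⟩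
  · have h := bound1 m hw1 hwL C hC hmin
    have hw0 : (0 : ℚ) < (w : ℚ) := by exact_mod_cast (by omega : 0 < w)
    rw [le_div_iff₀ (pow_pos hw0 2)]
    have h' : ((C.card : ℚ)) * ((w : ℚ) * (w : ℚ))
        ≤ (L.choose (w - 1) : ℚ) ^ 2 * (L.choose w : ℚ) ^ (m - 2) := by
      exact_mod_cast h
    calc (C.card : ℚ) * (w : ℚ) ^ 2 = (C.card : ℚ) * ((w : ℚ) * (w : ℚ)) := by ring
      _ ≤ _ := h'
  · have h := bound2 hw1 hwL C hC hmin
    have hw0 : (0 : ℚ) < ((L - w : ℕ) : ℚ) := by exact_mod_cast (by omega : 0 < L - w)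
    rw [le_div_iff₀ (pow_pos hw0 2)]
    have h' : ((C.card : ℚ)) * (((L - w : ℕ) : ℚ) * ((L - w : ℕ) : ℚ))
        ≤ (L.choose (w + 1) : ℚ) ^ 2 * (L.choose w : ℚ) ^ (m - 2) := by
      exact_mod_cast h
    calc (C.card : ℚ) * ((L - w : ℕ) : ℚ) ^ 2
        = (C.card : ℚ) * (((L - w : ℕ) : ℚ) * ((L - w : ℕ) : ℚ)) := by ring
      _ ≤ _ := h'
  · have h := bound3 C hC hmin
    have hden : (0 : ℚ) < 1 + (m : ℚ) * (w : ℚ) * ((L - w : ℕ) : ℚ) := by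
      have h1 : (0 : ℚ) ≤ (m : ℚ) := by positivity
      have h2 : (0 : ℚ) ≤ (w : ℚ) := by positivity
      have h3 : (0 : ℚ) ≤ ((L - w : ℕ) : ℚ) := by positivity
      have := mul_nonneg (mul_nonneg h1 h2) h3
      linarith
    rw [le_div_iff₀ hden]
    have h' : ((C.card : ℚ)) * (1 + (m : ℚ) * ((w : ℚ) * ((L - w : ℕ) : ℚ)))
        ≤ (L.choose w : ℚ) ^ m := by
      exact_mod_cast h
    calc (C.card : ℚ) * (1 + (m : ℚ) * (w : ℚ) * ((L - w : ℕ) : ℚ))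
        = (C.card : ℚ) * (1 + (m : ℚ) * ((w : ℚ) * ((L - w : ℕ) : ℚ))) := by ring
      _ ≤ _ := h'
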